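/- Let E be a directed graph in which no cycle has an entrance. Let x be an infinite path that is eventually periodic with data (0, p) for some p ≥ 1 (so x(p+i) = x(i) for all i and x(0), …, x(p−1) are pairwise distinct). If y is an infinite path with σ^p(y) = x (i.e. y(p+i) = x(i) for all i) and y is eventually periodic with data (0, q) for some q ≥ 1, then y = x. -/
import Mathlib


/-- An infinite path in the directed graph with edge set `E` and
range/source maps `r, s : E → V`. -/
def IsInfinitePath {V E : Type*} (r s : E → V) (x : ℕ → E) : Prop :=
  ∀ i : ℕ, s (x i) = r (x (i + 1))

/-- `e 0, …, e (p-1)` is a cycle of length `p ≥ 1`. -/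
def IsCycle {V E : Type*} (r s : E → V) (p : ℕ) (e : ℕ → E) : Prop :=
  1 ≤ p ∧ (∀ i : ℕ, i + 1 < p → s (e i) = r (e (i + 1))) ∧ s (e (p - 1)) = r (e 0)

/-- The cycle `e 0, …, e (p-1)` has an entrance. -/
def CycleHasEntrance {V E : Type*} (r s : E → V) (p : ℕ) (e : ℕ → E) : Prop :=
  ∃ i < p, ∃ f : E, f ≠ e i ∧ r f = r (e i)

/-- No cycle in the graph has an entrance. -/
def NoCycleHasEntrance {V E : Type*} (r s : E → V) : Prop :=
  ∀ (p : ℕ) (e : ℕ → E), IsCycle r s p e → ¬ CycleHasEntrance r s p e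

/-- `x` is eventually periodic with data `(n, p)`: `x (n+p+i) = x (n+i)` for
all `i`, and the edges `x 0, …, x (n+p-1)` are pairwise distinct. -/
def EventuallyPeriodicData {E : Type*} (x : ℕ → E) (n p : ℕ) : Prop :=
  (∀ i : ℕ, x (n + p + i) = x (n + i)) ∧ Set.InjOn x (Set.Iio (n + p))

/-- If no cycle has an entrance, `x` is periodic with data `(0, p)`,
`σ^p(y) = x`, and `y` is periodic with data `(0, q)`, then `y = x`. -/
theorem periodic_shift_preimage_eq
    {V E : Type*} (r s : E → V) (hnc : NoCycleHasEntrance r s)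
    (x : ℕ → E) (hx : IsInfinitePath r s x)
    (p : ℕ) (hp : 1 ≤ p) (hxper : EventuallyPeriodicData x 0 p)
    (y : ℕ → E) (hy : IsInfinitePath r s y)
    (hshift : ∀ i : ℕ, y (p + i) = x i)
    (q : ℕ) (hq : 1 ≤ q) (hyper : EventuallyPeriodicData y 0 q) :
    y = x := by
  have hxp : ∀ k i, x (k * p + i) = x i := by
    intro k
    induction k with
    | zero => simp
    | succ k ih =>
      intro i
      have := hxper.1 (k * p + i)
      simp only [Nat.zero_add] at this
      calc x ((k + 1) * p + i) = x (p + (k * p + i)) := by ring_nf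
        _ = x (k * p + i) := this
        _ = x i := ih i
  have hyq : ∀ k i, y (k * q + i) = y i := by
    intro k
    induction k with
    | zero => simp
    | succ k ih =>
      intro i
      have := hyper.1 (k * q + i)
      simp only [Nat.zero_add] at this
      calc y ((k + 1) * q + i) = y (q + (k * q + i)) := by ring_nf
        _ = y (k * q + i) := this
        _ = y i := ih i
  funext i
  have h1 : y i = y (p * q + i) := (hyq p i).symm
  have h2 : y (p * q + i) = x ((q - 1) * p + i) := by
    have : p * q + i = p + ((q - 1) * p + i) := by
      have : q - 1 + 1 = q := Nat.succ_pred_eq_of_pos hq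
      nlinarith [Nat.sub_add_cancel hq]
    rw [this, hshift]
  rw [h1, h2, hxp]
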